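/- If G = A ⊕ B is a torsion-free abelian group where A is completely decomposable and both A and B are τ-clipped, then G is τ-clipped. -/

import Mathlib

namespace Paper

open DirectSum

/-- A subgroup is a direct summand. -/
def IsSummand {G : Type*} [AddCommGroup G] (A : AddSubgroup G) : Prop :=
  ∃ B : AddSubgroup G, IsCompl A B

/-- A group has rank one: it is nonzero and embeds in `ℚ`. -/
def IsRankOne (G : Type*) [AddCommGroup G] : Prop :=
  (∃ x : G, x ≠ 0) ∧ ∃ f : G →+ ℚ, Function.Injective f

/-- A group is clipped if it has no rank-one direct summand. -/
def IsClipped (G : Type*) [AddCommGroup G] : Prop :=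
  ¬ ∃ A : AddSubgroup G, IsSummand A ∧ IsRankOne A

/-- A group is `τ`-clipped if it has no direct summand isomorphic to the
rank-one group `τ` (a subgroup of `ℚ` representing a type). -/
def IsClippedFor (G : Type*) [AddCommGroup G] (τ : AddSubgroup ℚ) : Prop :=
  ¬ ∃ A : AddSubgroup G, IsSummand A ∧ Nonempty (A ≃+ τ)

/-- A group is completely decomposable if it is a direct sum of rank-one
groups (nonzero subgroups of `ℚ`). -/
def IsCompletelyDecomposable (G : Type*) [AddCommGroup G] : Prop :=
  ∃ (ι : Type) (τ : ι → AddSubgroup ℚ), (∀ i, τ i ≠ ⊥) ∧ Nonempty (G ≃+ ⨁ i, τ i)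

/-- A group is `τ`-homogeneous completely decomposable if it is a direct sum
of copies of the rank-one group `τ`. -/
def IsHomogeneousCD (G : Type*) [AddCommGroup G] (τ : AddSubgroup ℚ) : Prop :=
  τ ≠ ⊥ ∧ ∃ ι : Type, Nonempty (G ≃+ ⨁ _i : ι, τ)

/-- Two groups are mono-equivalent if each embeds into the other. -/
def MonoEquiv (G H : Type*) [AddCommGroup G] [AddCommGroup H] : Prop :=
  (∃ f : G →+ H, Function.Injective f) ∧ (∃ f : H →+ G, Function.Injective f)

/-- A subgroup is pure if `n • x ∈ H` implies `n • x ∈ n • H`. -/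
def IsPure {G : Type*} [AddCommGroup G] (H : AddSubgroup G) : Prop :=
  ∀ (n : ℤ) (x : G), n • x ∈ H → ∃ y ∈ H, n • y = n • x

/-- A group is strongly separable if every pure rank-one subgroup is a
direct summand. -/
def StronglySeparable (G : Type*) [AddCommGroup G] : Prop :=
  ∀ H : AddSubgroup G, IsPure H → IsRankOne H → IsSummand H

/-- The pure closure of an element: all `x` with `n • x` a multiple of `g`
for some `n ≠ 0`. -/
def pureClosure {G : Type*} [AddCommGroup G] (g : G) : AddSubgroup G where
  carrier := {x | ∃ n : ℤ, n ≠ 0 ∧ n • x ∈ AddSubgroup.zmultiples g}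
  zero_mem' := ⟨1, one_ne_zero, by simpa using (AddSubgroup.zmultiples g).zero_mem⟩
  add_mem' := by
    rintro x y ⟨n, hn, hx⟩ ⟨m, hm, hy⟩
    refine ⟨n * m, mul_ne_zero hn hm, ?_⟩
    have h : (n * m) • (x + y) = m • (n • x) + n • (m • y) := by
      rw [smul_add, mul_smul, mul_smul, smul_comm n m x]
    rw [h]
    exact add_mem (AddSubgroup.zsmul_mem _ hx m) (AddSubgroup.zsmul_mem _ hy n)
  neg_mem' := by
    rintro x ⟨n, hn, hx⟩
    exact ⟨n, hn, by rw [smul_neg]; exact neg_mem hx⟩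

/-- A group is indecomposable if it is nonzero and has no nontrivial
direct sum decomposition. -/
def IsIndecomposableGroup (G : Type*) [AddCommGroup G] : Prop :=
  (∃ x : G, x ≠ 0) ∧ ∀ A B : AddSubgroup G, IsCompl A B → A = ⊥ ∨ B = ⊥


-- ===== auxiliary lemmas =====




/-- Extract a nonzero element from a nontrivial subgroup. -/
theorem exists_ne_zero_of_ne_bot {G : Type*} [AddCommGroup G] {H : AddSubgroup G}
    (h : H ≠ ⊥) : ∃ x : H, x ≠ 0 := by
  by_contra hc
  push_neg at hc
  apply h
  ext x
  simp only [AddSubgroup.mem_bot]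
  constructor
  · intro hx
    have := hc ⟨x, hx⟩
    exact congrArg Subtype.val this
  · rintro rfl; exact H.zero_mem

theorem subgroup_torsionfree {G : Type*} [AddCommGroup G] [NoZeroSMulDivisors ℤ G]
    (H : AddSubgroup G) : NoZeroSMulDivisors ℤ H := by
  constructor
  intro n x h
  rcases smul_eq_zero.mp (show n • (x : G) = 0 by
    exact_mod_cast congrArg (Subtype.val) h) with h | h
  · exact Or.inl h
  · exact Or.inr (Subtype.ext h)

/-- Equivalence between a submodule and an addsubgroup with the same members. -/
def memEquiv {G : Type*} [AddCommGroup G] {P : Submodule ℤ G} {A : AddSubgroup G}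
    (h : ∀ x, x ∈ P ↔ x ∈ A) : P ≃+ A where
  toFun x := ⟨x.1, (h _).mp x.2⟩
  invFun x := ⟨x.1, (h _).mpr x.2⟩
  left_inv _ := rfl
  right_inv _ := rfl
  map_add' _ _ := rfl

theorem mem_toIntSubmodule {G : Type*} [AddCommGroup G] {A : AddSubgroup G} {x : G} :
    x ∈ AddSubgroup.toIntSubmodule A ↔ x ∈ A := Iff.rfl

/-- rank-1 dependence relation -/
theorem exists_zsmul_rel {H : Type*} [AddCommGroup H] (f : H →+ ℚ)
    (hf : Function.Injective f) (x y : H) (hx : x ≠ 0) :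
    ∃ a b : ℤ, a ≠ 0 ∧ (y ≠ 0 → b ≠ 0) ∧ a • y = b • x := by
  have hfx : f x ≠ 0 := fun h => hx (hf (by simpa using h))
  refine ⟨(f y).den * (f x).num, (f y).num * (f x).den, ?_, ?_, ?_⟩
  · exact mul_ne_zero (by exact_mod_cast (f y).den_nz) (Rat.num_ne_zero.mpr hfx)
  · intro hy
    have hfy : f y ≠ 0 := fun h => hy (hf (by simpa using h))
    exact mul_ne_zero (Rat.num_ne_zero.mpr hfy) (by exact_mod_cast (f x).den_nz)
  · apply hf
    rw [map_zsmul, map_zsmul]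
    have key : ∀ q : ℚ, (q.den : ℚ) * q = q.num := by
      intro q
      rw [mul_comm, ← eq_div_iff (show (q.den : ℚ) ≠ 0 by exact_mod_cast q.den_nz)]
      exact (Rat.num_div_den q).symm
    have h1 := key (f y)
    have h2 := key (f x)
    rw [zsmul_eq_mul, zsmul_eq_mul]
    push_cast
    calc ((f y).den : ℚ) * (f x).num * f y = ((f x).num : ℚ) * (((f y).den : ℚ) * f y) := by ring
    _ = ((f y).num : ℚ) * (((f x).den : ℚ) * f x) := by rw [h1, h2]; ring
    _ = ((f y).num : ℚ) * (f x).den * f x := by ring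

theorem rat_den_mul (q : ℚ) : (q.den : ℚ) * q = q.num := by
  rw [mul_comm, ← eq_div_iff (show (q.den : ℚ) ≠ 0 by exact_mod_cast q.den_nz)]
  exact (Rat.num_div_den q).symm

/-- Any two rationals lie in a common cyclic subgroup generated by a
ℤ-combination of them. -/
theorem exists_common_gen (a b : ℚ) :
    ∃ c : ℚ, (∃ s t : ℤ, s • a + t • b = c) ∧ (∃ m : ℤ, m • c = a) ∧ (∃ k : ℤ, k • c = b) := by
  by_cases ha : a = 0
  · exact ⟨b, ⟨0, 1, by simp⟩, ⟨0, by simp [ha]⟩, ⟨1, by simp⟩⟩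
  set p : ℤ := a.num * b.den with hp_def
  set q : ℤ := b.num * a.den with hq_def
  set m : ℤ := (a.den : ℤ) * (b.den : ℤ) with hm_def
  have hm0 : (m : ℚ) ≠ 0 := by
    simp only [hm_def]
    push_cast
    exact mul_ne_zero (by exact_mod_cast a.den_nz) (by exact_mod_cast b.den_nz)
  have hp : (p : ℚ) = a * m := by
    simp only [hp_def, hm_def]
    push_cast
    have := rat_den_mul a
    calc ((a.num : ℚ)) * b.den = ((a.den : ℚ) * a) * b.den := by rw [this]
    _ = a * ((a.den : ℚ) * b.den) := by ring
  have hq : (q : ℚ) = b * m := by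
    simp only [hq_def, hm_def]
    push_cast
    have := rat_den_mul b
    calc ((b.num : ℚ)) * a.den = ((b.den : ℚ) * b) * a.den := by rw [this]
    _ = b * ((a.den : ℚ) * b.den) := by ring
  have hp0 : p ≠ 0 := by
    rw [hp_def]
    exact mul_ne_zero (Rat.num_ne_zero.mpr ha) (by exact_mod_cast b.den_nz)
  set g : ℤ := (Int.gcd p q : ℤ) with hg_def
  have hg0 : g ≠ 0 := by
    simp only [hg_def, ne_eq, Int.natCast_eq_zero, Int.gcd_eq_zero_iff, not_and_or]
    exact Or.inl hp0
  refine ⟨(g : ℚ) / m, ⟨Int.gcdA p q, Int.gcdB p q, ?_⟩, ?_, ?_⟩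
  · have hbez : g = p * Int.gcdA p q + q * Int.gcdB p q := Int.gcd_eq_gcd_ab p q
    rw [zsmul_eq_mul, zsmul_eq_mul]
    rw [eq_div_iff hm0]
    calc (↑(Int.gcdA p q) * a + ↑(Int.gcdB p q) * b) * m
        = ↑(Int.gcdA p q) * (a * m) + ↑(Int.gcdB p q) * (b * m) := by ring
      _ = ↑(Int.gcdA p q) * p + ↑(Int.gcdB p q) * q := by rw [hp, hq]
      _ = ((p * Int.gcdA p q + q * Int.gcdB p q : ℤ) : ℚ) := by push_cast; ring
      _ = (g : ℚ) := by rw [← hbez]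
  · refine ⟨p / g, ?_⟩
    have hdvd : g ∣ p := Int.gcd_dvd_left p q
    rw [zsmul_eq_mul, mul_div_assoc']
    rw [show (↑(p / g) : ℚ) * g = ((p / g * g : ℤ) : ℚ) by push_cast; ring]
    rw [Int.ediv_mul_cancel hdvd]
    rw [hp]
    field_simp
  · refine ⟨q / g, ?_⟩
    have hdvd : g ∣ q := Int.gcd_dvd_right p q
    rw [zsmul_eq_mul, mul_div_assoc']
    rw [show (↑(q / g) : ℚ) * g = ((q / g * g : ℤ) : ℚ) by push_cast; ring]
    rw [Int.ediv_mul_cancel hdvd]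
    rw [hq]
    field_simp



/-- The sandwich lemma: a subgroup squeezed between `nY` and `Y` inside `ℚ`
is isomorphic to `Y`. -/
theorem sandwich (Y Z : AddSubgroup ℚ) (hY : Y ≠ ⊥) (n : ℤ) (hn : n ≠ 0)
    (h1 : ∀ y ∈ Y, n • y ∈ Z) (h2 : Z ≤ Y) : Nonempty (↥Y ≃+ ↥Z) := by
  classical
  -- characterization of the "index" of Z at each nonzero y ∈ Y
  have char : ∀ y : ℚ, y ∈ Y → y ≠ 0 →
      ∃ d : ℤ, d ≠ 0 ∧ d ∣ n ∧ ∀ k : ℤ, k • y ∈ Z ↔ d ∣ k := by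
    intro y hy hy0
    set S : AddSubgroup ℤ :=
      { carrier := {k : ℤ | k • y ∈ Z}
        zero_mem' := by simpa using Z.zero_mem
        add_mem' := by
          intro k l hk hl
          simp only [Set.mem_setOf_eq, add_smul] at *
          exact Z.add_mem hk hl
        neg_mem' := by
          intro k hk
          simp only [Set.mem_setOf_eq, neg_smul] at *
          exact Z.neg_mem hk } with hS_def
    have hmemS : ∀ k : ℤ, k ∈ S ↔ k • y ∈ Z := fun k => Iff.rfl
    obtain ⟨a, haS⟩ := Int.subgroup_cyclic S
    have hchar : ∀ k : ℤ, k • y ∈ Z ↔ a ∣ k := by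
      intro k
      rw [← hmemS, haS, AddSubgroup.mem_closure_singleton]
      constructor
      · rintro ⟨m, rfl⟩; exact ⟨m, by rw [smul_eq_mul, mul_comm]⟩
      · rintro ⟨m, rfl⟩; exact ⟨m, by rw [smul_eq_mul, mul_comm]⟩
    have hdvdn : a ∣ n := (hchar n).mp (h1 y hy)
    have ha0 : a ≠ 0 := by
      rintro rfl
      exact hn (zero_dvd_iff.mp hdvdn)
    exact ⟨a, ha0, hdvdn, hchar⟩
  -- the set of possible indices
  set N : Set ℕ := {m : ℕ | ∃ y : ℚ, y ∈ Y ∧ y ≠ 0 ∧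
      ∃ d : ℤ, d.natAbs = m ∧ d ≠ 0 ∧ (∀ k : ℤ, k • y ∈ Z ↔ d ∣ k)} with hN_def
  obtain ⟨y₁, hy₁⟩ := exists_ne_zero_of_ne_bot hY
  have hy₁0 : (y₁ : ℚ) ≠ 0 := fun h => hy₁ (Subtype.ext h)
  have hNne : N.Nonempty := by
    obtain ⟨d, hd0, hdn, hdc⟩ := char y₁ y₁.2 hy₁0
    exact ⟨d.natAbs, y₁, y₁.2, hy₁0, d, rfl, hd0, hdc⟩
  have hNbdd : BddAbove N := by
    refine ⟨n.natAbs, ?_⟩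
    rintro m ⟨y, hy, hy0, d, rfl, hd0, hdc⟩
    have : d ∣ n := (hdc n).mp (h1 y hy)
    exact Nat.le_of_dvd (Int.natAbs_pos.mpr hn) (Int.natAbs_dvd_natAbs.mpr this)
  obtain ⟨ys, hysY, hys0, ds, hdsabs, hds0, hdsc⟩ := Nat.sSup_mem hNne hNbdd
  -- comparison: for any y' ∈ Y containing ys among its multiples, index = ± ds
  have comp : ∀ y' : ℚ, y' ∈ Y → y' ≠ 0 → (∃ j : ℤ, j • y' = ys) →
      ∀ d' : ℤ, d' ≠ 0 → (∀ k : ℤ, k • y' ∈ Z ↔ d' ∣ k) → d' = ds ∨ d' = -ds := by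
    rintro y' hy' hy'0 ⟨j, hj⟩ d' hd'0 hd'c
    have hle : d'.natAbs ≤ ds.natAbs := by
      rw [hdsabs]
      exact le_csSup hNbdd ⟨y', hy', hy'0, d', rfl, hd'0, hd'c⟩
    have hdvd : ds ∣ d' := by
      apply (hdsc d').mp
      rw [← hj, smul_smul]
      exact (hd'c (d' * j)).mpr ⟨j, rfl⟩
    have hge : ds.natAbs ≤ d'.natAbs :=
      Nat.le_of_dvd (Int.natAbs_pos.mpr hd'0) (Int.natAbs_dvd_natAbs.mpr hdvd)
    exact Int.natAbs_eq_natAbs_iff.mp (le_antisymm hle hge)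
  have hds0' : ((ds : ℚ)) ≠ 0 := Int.cast_ne_zero.mpr hds0
  -- forward: ds • y ∈ Z for all y ∈ Y
  have fwd : ∀ y : ℚ, y ∈ Y → (ds : ℚ) * y ∈ Z := by
    intro y hy
    by_cases hy0 : y = 0
    · rw [hy0, mul_zero]; exact Z.zero_mem
    obtain ⟨c, ⟨s, t, hst⟩, ⟨m, hm⟩, ⟨k, hk⟩⟩ := exists_common_gen y ys
    have hcY : c ∈ Y := by rw [← hst]; exact Y.add_mem (Y.zsmul_mem hy s) (Y.zsmul_mem hysY t)
    have hc0 : c ≠ 0 := by rintro rfl; rw [smul_zero] at hm; exact hy0 hm.symm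
    obtain ⟨dc, hdc0, hdcn, hdcc⟩ := char c hcY hc0
    have hsign := comp c hcY hc0 ⟨k, hk⟩ dc hdc0 hdcc
    have hmem : ∀ i : ℤ, dc ∣ i → i • c ∈ Z := fun i hi => (hdcc i).mpr hi
    have : (ds * m) • c ∈ Z := by
      apply hmem
      rcases hsign with h | h
      · exact Dvd.dvd.mul_right (h ▸ dvd_refl dc) m
      · refine Dvd.dvd.mul_right ?_ m
        rw [h]; exact ⟨-1, by ring⟩
    rwa [mul_smul, hm, zsmul_eq_mul] at this
  -- backward: every z ∈ Z is ds • y for some y ∈ Y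
  have bwd : ∀ z : ℚ, z ∈ Z → ∃ y : ℚ, y ∈ Y ∧ (ds : ℚ) * y = z := by
    intro z hz
    by_cases hz0 : z = 0
    · exact ⟨0, Y.zero_mem, by simp [hz0]⟩
    have hzY : z ∈ Y := h2 hz
    obtain ⟨c, ⟨s, t, hst⟩, ⟨m, hm⟩, ⟨k, hk⟩⟩ := exists_common_gen z ys
    have hcY : c ∈ Y := by rw [← hst]; exact Y.add_mem (Y.zsmul_mem hzY s) (Y.zsmul_mem hysY t)
    have hc0 : c ≠ 0 := by rintro rfl; rw [smul_zero] at hm; exact hz0 hm.symm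
    obtain ⟨dc, hdc0, hdcn, hdcc⟩ := char c hcY hc0
    have hsign := comp c hcY hc0 ⟨k, hk⟩ dc hdc0 hdcc
    have hdvdm : dc ∣ m := by
      apply (hdcc m).mp
      rw [hm]; exact hz
    obtain ⟨i, hi⟩ := hdvdm
    rcases hsign with h | h
    · refine ⟨i • c, Y.zsmul_mem hcY i, ?_⟩
      rw [← hm, hi, h]
      simp only [zsmul_eq_mul]
      push_cast
      ring
    · refine ⟨(-i) • c, Y.zsmul_mem hcY (-i), ?_⟩
      rw [← hm, hi, h]
      simp only [zsmul_eq_mul]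
      push_cast
      ring
  -- build the equivalence
  refine ⟨{ toFun := fun y => ⟨(ds : ℚ) * y, fwd y y.2⟩
            invFun := fun z => ⟨Classical.choose (bwd z z.2),
              (Classical.choose_spec (bwd z z.2)).1⟩
            left_inv := ?_
            right_inv := ?_
            map_add' := ?_ }⟩
  · intro y
    apply Subtype.ext
    have hspec := Classical.choose_spec (bwd ((ds:ℚ) * y) (fwd y y.2))
    exact mul_left_cancel₀ hds0' hspec.2
  · intro z
    apply Subtype.ext
    exact (Classical.choose_spec (bwd z z.2)).2
  · intro y1 y2
    apply Subtype.ext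
    simp [mul_add]

/-- An additive hom from a subgroup of `ℚ` to `ℚ` is multiplication by a fixed
rational, in cross-multiplied form. -/
theorem hom_eq_mul {X : AddSubgroup ℚ} (f : ↥X →+ ℚ) (x₀ : ↥X) (h0 : x₀ ≠ 0) (x : ↥X) :
    f x * (x₀ : ℚ) = f x₀ * (x : ℚ) := by
  have hsub : Function.Injective X.subtype := Subtype.coe_injective
  obtain ⟨a, b, ha, -, hab⟩ := exists_zsmul_rel X.subtype hsub x₀ x h0
  have e1 : a • f x = b • f x₀ := by rw [← map_zsmul, ← map_zsmul, hab]
  have e2 : a • (x : ℚ) = b • (x₀ : ℚ) := by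
    have := congrArg (X.subtype) hab
    rwa [map_zsmul, map_zsmul] at this
  have ha' : (a : ℚ) ≠ 0 := Int.cast_ne_zero.mpr ha
  apply mul_left_cancel₀ ha'
  rw [zsmul_eq_mul, zsmul_eq_mul] at e1 e2
  calc (a : ℚ) * (f x * (x₀ : ℚ)) = ((a : ℚ) * f x) * (x₀ : ℚ) := by ring
    _ = ((b : ℚ) * f x₀) * (x₀ : ℚ) := by rw [e1]
    _ = f x₀ * ((b : ℚ) * (x₀ : ℚ)) := by ring
    _ = f x₀ * ((a : ℚ) * (x : ℚ)) := by rw [← e2]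
    _ = (a : ℚ) * (f x₀ * (x : ℚ)) := by ring

/-- Mutually embedding nontrivial subgroups of `ℚ` are isomorphic. -/
theorem mutual_subgroups (X Y : AddSubgroup ℚ) (hX : X ≠ ⊥)
    (f : ↥X →+ ↥Y) (hf : Function.Injective f)
    (g : ↥Y →+ ↥X) (hg : Function.Injective g) : Nonempty (↥X ≃+ ↥Y) := by
  obtain ⟨x₀, hx₀⟩ := exists_ne_zero_of_ne_bot hX
  set fQ : ↥X →+ ℚ := Y.subtype.comp f with hfQ_def
  set gQ : ↥Y →+ ℚ := X.subtype.comp g with hgQ_def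
  have hx₀Q : (x₀ : ℚ) ≠ 0 := fun h => hx₀ (Subtype.ext h)
  have hfQ0 : fQ x₀ ≠ 0 := by
    intro h
    apply hx₀
    apply hf
    rw [map_zero]
    exact Subtype.ext (by simpa [hfQ_def] using h)
  set q : ℚ := fQ x₀ / (x₀ : ℚ) with hq_def
  have hq0 : q ≠ 0 := div_ne_zero hfQ0 hx₀Q
  have hfq : ∀ x : ↥X, fQ x = q * x := by
    intro x
    rw [hq_def, div_mul_eq_mul_div, ← hom_eq_mul fQ x₀ hx₀ x, mul_div_assoc,
      div_self hx₀Q, mul_one]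
  set y₀ : ↥Y := f x₀ with hy₀_def
  have hy₀ : y₀ ≠ 0 := fun h => hx₀ (hf (by rw [map_zero, ← hy₀_def, h]))
  have hy₀Q : (y₀ : ℚ) ≠ 0 := fun h => hy₀ (Subtype.ext h)
  have hgQ0 : gQ y₀ ≠ 0 := by
    intro h
    apply hy₀
    apply hg
    rw [map_zero]
    exact Subtype.ext (by simpa [hgQ_def] using h)
  set r : ℚ := gQ y₀ / (y₀ : ℚ) with hr_def
  have hr0 : r ≠ 0 := div_ne_zero hgQ0 hy₀Q
  have hgr : ∀ y : ↥Y, gQ y = r * y := by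
    intro y
    rw [hr_def, div_mul_eq_mul_div, ← hom_eq_mul gQ y₀ hy₀ y, mul_div_assoc,
      div_self hy₀Q, mul_one]
  set Z : AddSubgroup ℚ := X.map (AddMonoidHom.mulLeft q) with hZ_def
  have eqv1 : ↥X ≃+ ↥Z := AddSubgroup.equivMapOfInjective X _ (mul_right_injective₀ hq0)
  have hZY : Z ≤ Y := by
    rintro _ ⟨x, hx, rfl⟩
    have : fQ ⟨x, hx⟩ ∈ Y := (f ⟨x, hx⟩).2
    rwa [hfq ⟨x, hx⟩] at this
  set t : ℚ := q * r with ht_def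
  have ht0 : t ≠ 0 := mul_ne_zero hq0 hr0
  set Zd : AddSubgroup ℚ := Z.map (AddMonoidHom.mulLeft ((t.den : ℚ))) with hZd_def
  have hden0 : ((t.den : ℚ)) ≠ 0 := by exact_mod_cast t.den_nz
  have eqv2 : ↥Z ≃+ ↥Zd := AddSubgroup.equivMapOfInjective Z _ (mul_right_injective₀ hden0)
  have hZdZ : Zd ≤ Z := by
    rintro _ ⟨z, hz, rfl⟩
    have : ((t.den : ℤ)) • z ∈ Z := Z.zsmul_mem hz _
    simpa [zsmul_eq_mul] using this
  have hZdY : Zd ≤ Y := le_trans hZdZ hZY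
  have hnum : ∀ y ∈ Y, (t.num) • y ∈ Zd := by
    intro y hy
    have hrX : r * y ∈ X := by
      have : gQ ⟨y, hy⟩ ∈ X := (g ⟨y, hy⟩).2
      rwa [hgr ⟨y, hy⟩] at this
    have hqZ : q * (r * y) ∈ Z := ⟨r * y, hrX, rfl⟩
    have : (t.den : ℚ) * (q * (r * y)) ∈ Zd := ⟨q * (r * y), hqZ, rfl⟩
    have heq : (t.num : ℚ) * y = (t.den : ℚ) * (q * (r * y)) := by
      rw [← rat_den_mul t, ht_def]
      ring
    rw [zsmul_eq_mul, heq]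
    exact this
  have hnum0 : t.num ≠ 0 := Rat.num_ne_zero.mpr ht0
  have hYne : Y ≠ ⊥ := by
    intro h
    have h2 : ∃ w : ℚ, w ∈ Y ∧ w ≠ 0 := ⟨y₀, y₀.2, hy₀Q⟩
    rw [h] at h2
    obtain ⟨w, hw1, hw2⟩ := h2
    exact hw2 (AddSubgroup.mem_bot.mp hw1)
  obtain ⟨σ⟩ := sandwich Y Zd hYne t.num hnum0 hnum hZdY
  exact ⟨eqv1.trans (eqv2.trans σ.symm)⟩

/-- Mutually embedding rank-one groups are isomorphic. -/
theorem mutual_rank_one {H K : Type*} [AddCommGroup H] [AddCommGroup K]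
    (hH : ∃ x : H, x ≠ 0)
    (fH : H →+ ℚ) (hfH : Function.Injective fH)
    (fK : K →+ ℚ) (hfK : Function.Injective fK)
    (u : H →+ K) (hu : Function.Injective u)
    (v : K →+ H) (hv : Function.Injective v) : Nonempty (H ≃+ K) := by
  obtain ⟨x, hx⟩ := hH
  set X : AddSubgroup ℚ := fH.range with hX_def
  set Y : AddSubgroup ℚ := fK.range with hY_def
  have eH : H ≃+ ↥X := AddMonoidHom.ofInjective hfH
  have eK : K ≃+ ↥Y := AddMonoidHom.ofInjective hfK
  have hXne : X ≠ ⊥ := by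
    intro h
    apply hx
    apply hfH
    rw [map_zero]
    have : fH x ∈ X := ⟨x, rfl⟩
    rw [h, AddSubgroup.mem_bot] at this
    exact this
  set f : ↥X →+ ↥Y := (eK.toAddMonoidHom.comp u).comp eH.symm.toAddMonoidHom with hf_def
  set g : ↥Y →+ ↥X := (eH.toAddMonoidHom.comp v).comp eK.symm.toAddMonoidHom with hg_def
  have hfinj : Function.Injective f := by
    intro a b hab
    simp only [hf_def, AddMonoidHom.coe_comp, Function.comp_apply,
      AddEquiv.coe_toAddMonoidHom] at hab
    exact eH.symm.injective (hu (eK.injective hab))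
  have hginj : Function.Injective g := by
    intro a b hab
    simp only [hg_def, AddMonoidHom.coe_comp, Function.comp_apply,
      AddEquiv.coe_toAddMonoidHom] at hab
    exact eK.symm.injective (hv (eH.injective hab))
  obtain ⟨w⟩ := mutual_subgroups X Y hXne f hfinj g hginj
  exact ⟨(eH.trans w).trans eK.symm⟩

/-- Transport a subgroup along the comap of an isomorphism. -/
def comapEquiv {G H : Type*} [AddCommGroup G] [AddCommGroup H] (e : G ≃+ H)
    (C : AddSubgroup H) : ↥(C.comap e.toAddMonoidHom) ≃+ ↥C where
  toFun x := ⟨e (x : G), x.2⟩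
  invFun y := ⟨e.symm y, by
    simp only [AddSubgroup.mem_comap, AddEquiv.coe_toAddMonoidHom, AddEquiv.apply_symm_apply]
    exact y.2⟩
  left_inv x := Subtype.ext (e.symm_apply_apply (x : G))
  right_inv y := Subtype.ext (e.apply_symm_apply (y : H))
  map_add' a b := Subtype.ext (map_add e (a : G) (b : G))

theorem isClippedFor_of_equiv {G H : Type*} [AddCommGroup G] [AddCommGroup H]
    (e : G ≃+ H) (τ : AddSubgroup ℚ) (h : IsClippedFor G τ) : IsClippedFor H τ := by
  rintro ⟨C, ⟨D, hCD⟩, ⟨ψ⟩⟩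
  apply h
  refine ⟨C.comap e.toAddMonoidHom, ⟨D.comap e.toAddMonoidHom, ?_, ?_⟩,
    ⟨(comapEquiv e C).trans ψ⟩⟩
  · rw [disjoint_iff]
    ext x
    simp only [AddSubgroup.mem_inf, AddSubgroup.mem_comap, AddSubgroup.mem_bot]
    constructor
    · rintro ⟨h1, h2⟩
      have : e x ∈ C ⊓ D := ⟨h1, h2⟩
      rw [disjoint_iff.mp hCD.disjoint, AddSubgroup.mem_bot] at this
      have := e.injective (this.trans (map_zero e).symm)
      exact this
    · rintro rfl
      exact ⟨by simpa using C.zero_mem, by simpa using D.zero_mem⟩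
  · rw [codisjoint_iff]
    ext x
    simp only [AddSubgroup.mem_top, iff_true]
    have hx : e x ∈ C ⊔ D := by
      rw [codisjoint_iff.mp hCD.codisjoint]; trivial
    rw [AddSubgroup.mem_sup] at hx
    obtain ⟨c, hc, d, hd, hcd⟩ := hx
    rw [AddSubgroup.mem_sup]
    refine ⟨e.symm c, ?_, e.symm d, ?_, ?_⟩
    · simp only [AddSubgroup.mem_comap, AddEquiv.coe_toAddMonoidHom, AddEquiv.apply_symm_apply]
      exact hc
    · simp only [AddSubgroup.mem_comap, AddEquiv.coe_toAddMonoidHom, AddEquiv.apply_symm_apply]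
      exact hd
    · apply e.injective
      rw [map_add]
      simp only [AddEquiv.apply_symm_apply]
      exact hcd

theorem isCompl_addSubgroupOf {G : Type*} [AddCommGroup G] {X Y W : AddSubgroup G}
    (hX : X ≤ W) (hY : Y ≤ W) (hi : X ⊓ Y = ⊥) (hs : X ⊔ Y = W) :
    IsCompl (X.addSubgroupOf W) (Y.addSubgroupOf W) := by
  constructor
  · rw [disjoint_iff]
    ext x
    simp only [AddSubgroup.mem_inf, AddSubgroup.mem_addSubgroupOf, AddSubgroup.mem_bot]
    constructor
    · rintro ⟨h1, h2⟩
      have : (x : G) ∈ X ⊓ Y := ⟨h1, h2⟩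
      rw [hi, AddSubgroup.mem_bot] at this
      exact Subtype.ext this
    · rintro rfl
      exact ⟨by simpa using X.zero_mem, by simpa using Y.zero_mem⟩
  · rw [codisjoint_iff]
    ext x
    simp only [AddSubgroup.mem_top, iff_true]
    have hx : (x : G) ∈ X ⊔ Y := by rw [hs]; exact x.2
    rw [AddSubgroup.mem_sup] at hx
    obtain ⟨c, hc, d, hd, hcd⟩ := hx
    rw [AddSubgroup.mem_sup]
    exact ⟨⟨c, hX hc⟩, hc, ⟨d, hY hd⟩, hd, Subtype.ext hcd⟩

theorem addSubgroupOf_sup {G : Type*} [AddCommGroup G] {X Y W : AddSubgroup G}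
    (hX : X ≤ W) (hY : Y ≤ W) :
    (X ⊔ Y).addSubgroupOf W = X.addSubgroupOf W ⊔ Y.addSubgroupOf W := by
  ext x
  rw [AddSubgroup.mem_addSubgroupOf, AddSubgroup.mem_sup, AddSubgroup.mem_sup]
  constructor
  · rintro ⟨c, hc, d, hd, hcd⟩
    exact ⟨⟨c, hX hc⟩, hc, ⟨d, hY hd⟩, hd, Subtype.ext hcd⟩
  · rintro ⟨c, hc, d, hd, hcd⟩
    rw [AddSubgroup.mem_addSubgroupOf] at hc hd
    exact ⟨c, hc, d, hd, by rw [← hcd]; rfl⟩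

/-- Projection onto `A` along `B` for complementary subgroups, as a map `G → G`. -/
noncomputable def projTo {G : Type*} [AddCommGroup G] {A B : AddSubgroup G}
    (h : IsCompl A B) : G →ₗ[ℤ] G :=
  (AddSubgroup.toIntSubmodule A).subtype ∘ₗ
    Submodule.projectionOnto (AddSubgroup.toIntSubmodule A) (AddSubgroup.toIntSubmodule B)
      (AddSubgroup.toIntSubmodule.isCompl h)

theorem projTo_mem {G : Type*} [AddCommGroup G] {A B : AddSubgroup G}
    (h : IsCompl A B) (x : G) : projTo h x ∈ A :=
  (Submodule.projectionOnto _ _ (AddSubgroup.toIntSubmodule.isCompl h) x).2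

theorem projTo_eq_zero_iff {G : Type*} [AddCommGroup G] {A B : AddSubgroup G}
    (h : IsCompl A B) {x : G} : projTo h x = 0 ↔ x ∈ B := by
  rw [show (x ∈ B) = (x ∈ AddSubgroup.toIntSubmodule B) from rfl]
  rw [← Submodule.linearProjOfIsCompl_apply_eq_zero_iff (AddSubgroup.toIntSubmodule.isCompl h)]
  constructor
  · intro hx
    exact Subtype.ext hx
  · intro hx
    rw [projTo]
    simp only [LinearMap.coe_comp, Function.comp_apply, Submodule.coe_subtype]
    rw [hx]
    rfl

theorem projTo_eq_self {G : Type*} [AddCommGroup G] {A B : AddSubgroup G}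
    (h : IsCompl A B) {x : G} (hx : x ∈ A) : projTo h x = x := by
  have := Submodule.linearProjOfIsCompl_apply_left (AddSubgroup.toIntSubmodule.isCompl h)
    ⟨x, hx⟩
  rw [projTo]
  simp only [LinearMap.coe_comp, Function.comp_apply, Submodule.coe_subtype]
  rw [this]

theorem projTo_add_projTo {G : Type*} [AddCommGroup G] {A B : AddSubgroup G}
    (h : IsCompl A B) (x : G) : projTo h x + projTo h.symm x = x := by
  have := Submodule.projection_add_projection_eq_self
    (AddSubgroup.toIntSubmodule.isCompl h) x
  exact this

/-- CORE: peeling off one rank-one non-τ summand preserves τ-clippedness. -/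
theorem core {G : Type*} [AddCommGroup G] [NoZeroSMulDivisors ℤ G]
    (R B : AddSubgroup G) (τ : AddSubgroup ℚ) (hτ : τ ≠ ⊥) (h : IsCompl R B)
    (hR1 : ∃ e : ↥R →+ ℚ, Function.Injective e)
    (hRτ : ¬ Nonempty (↥R ≃+ τ))
    (hB : IsClippedFor ↥B τ) : IsClippedFor G τ := by
  rintro ⟨C, ⟨D, hCD⟩, ⟨φ⟩⟩
  obtain ⟨e, he⟩ := hR1
  set fC : ↥C →+ ℚ := τ.subtype.comp φ.toAddMonoidHom with hfC_def
  have hfC : Function.Injective fC := fun a b hab => φ.injective (Subtype.ext hab)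
  obtain ⟨t0, ht0⟩ := exists_ne_zero_of_ne_bot hτ
  set c₀ : ↥C := φ.symm t0 with hc₀_def
  have hc₀ : c₀ ≠ 0 := fun hh => ht0 (by
    rw [← AddEquiv.apply_symm_apply φ t0, ← hc₀_def, hh, map_zero])
  -- if a linear functional kills one nonzero element of C, it kills all of C
  have kill : ∀ (L : G →ₗ[ℤ] G), (∃ x : ↥C, x ≠ 0 ∧ L (x : G) = 0) →
      ∀ y : ↥C, L (y : G) = 0 := by
    rintro L ⟨x, hx0, hLx⟩ y
    obtain ⟨a, b, ha, -, hab⟩ := exists_zsmul_rel fC hfC x y hx0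
    have hab' : a • (y : G) = b • (x : G) := by exact_mod_cast congrArg Subtype.val hab
    have : a • L (y : G) = b • L (x : G) := by
      rw [← map_smul, ← map_smul, hab']
    rw [hLx, smul_zero] at this
    rcases smul_eq_zero.mp this with h' | h'
    · exact absurd h' ha
    · exact h'
  by_cases h1 : ∃ x : ↥C, x ≠ 0 ∧ (x : G) ∈ R
  · -- Case 1 : C meets R, hence C ≤ R, hence C = R, hence R ≃ τ, contradiction.
    obtain ⟨x, hx0, hxR⟩ := h1
    have hCR : ∀ y : ↥C, (y : G) ∈ R := fun y =>
      (projTo_eq_zero_iff h.symm).mp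
        (kill (projTo h.symm) ⟨x, hx0, (projTo_eq_zero_iff h.symm).mpr hxR⟩ y)
    have hCleR : C ≤ R := fun g hg => hCR ⟨g, hg⟩
    have hDR : D ⊓ R = ⊥ := by
      by_contra hne
      obtain ⟨w, hw0⟩ := exists_ne_zero_of_ne_bot hne
      have hwD : (w : G) ∈ D := (AddSubgroup.mem_inf.mp w.2).1
      have hwR : (w : G) ∈ R := (AddSubgroup.mem_inf.mp w.2).2
      have hx0' : (⟨(x : G), hxR⟩ : ↥R) ≠ 0 := fun hh => hx0 (Subtype.ext (by
        simpa using congrArg Subtype.val hh))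
      obtain ⟨a, b, ha, hb, hab⟩ := exists_zsmul_rel e he ⟨(x : G), hxR⟩ ⟨(w : G), hwR⟩ hx0'
      have hw0' : (⟨(w : G), hwR⟩ : ↥R) ≠ 0 := fun hh => hw0 (Subtype.ext (by
        simpa using congrArg Subtype.val hh))
      have hb0 := hb hw0'
      have hab' : a • (w : G) = b • (x : G) := by
        have hh := congrArg Subtype.val hab
        rw [AddSubgroupClass.coe_zsmul, AddSubgroupClass.coe_zsmul] at hh
        exact hh
      have hmem : b • (x : G) ∈ C ⊓ D := by
        rw [AddSubgroup.mem_inf]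
        constructor
        · exact C.zsmul_mem x.2 b
        · rw [← hab']; exact D.zsmul_mem hwD a
      rw [disjoint_iff.mp hCD.disjoint, AddSubgroup.mem_bot] at hmem
      rcases smul_eq_zero.mp hmem with h' | h'
      · exact hb0 h'
      · exact hx0 (Subtype.ext h')
    have hRC : R = C := by
      have hmod : (C ⊔ D) ⊓ R = C ⊔ (D ⊓ R) := sup_inf_assoc_of_le D hCleR
      rw [codisjoint_iff.mp hCD.codisjoint, top_inf_eq, hDR, sup_bot_eq] at hmod
      exact hmod
    exact hRτ ⟨(AddEquiv.addSubgroupCongr hRC).trans φ⟩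
  by_cases h2 : ∃ x : ↥C, x ≠ 0 ∧ (x : G) ∈ B
  · -- Case 2 : C meets B, hence C ≤ B, and C is a τ-summand of B, contradiction.
    obtain ⟨x, hx0, hxB⟩ := h2
    have hCB : ∀ y : ↥C, (y : G) ∈ B := fun y =>
      (projTo_eq_zero_iff h).mp
        (kill (projTo h) ⟨x, hx0, (projTo_eq_zero_iff h).mpr hxB⟩ y)
    have hCleB : C ≤ B := fun g hg => hCB ⟨g, hg⟩
    have hsup : C ⊔ (D ⊓ B) = B := by
      have hmod : (C ⊔ D) ⊓ B = C ⊔ (D ⊓ B) := sup_inf_assoc_of_le D hCleB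
      rw [codisjoint_iff.mp hCD.codisjoint, top_inf_eq] at hmod
      exact hmod.symm
    have hinf : C ⊓ (D ⊓ B) = ⊥ := by
      rw [eq_bot_iff]
      intro g hg
      rw [AddSubgroup.mem_inf, AddSubgroup.mem_inf] at hg
      have : g ∈ C ⊓ D := AddSubgroup.mem_inf.mpr ⟨hg.1, hg.2.1⟩
      rwa [disjoint_iff.mp hCD.disjoint] at this
    apply hB
    refine ⟨C.addSubgroupOf B, ⟨(D ⊓ B).addSubgroupOf B,
      isCompl_addSubgroupOf hCleB inf_le_right hinf hsup⟩,
      ⟨(AddSubgroup.addSubgroupOfEquivOfLe hCleB).trans φ⟩⟩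
  -- Case 3 : C ⊓ R = ⊥ and C ⊓ B = ⊥.
  push_neg at h1 h2
  by_cases h3 : ∀ r : ↥R, projTo hCD (r : G) = 0
  · -- Case 3a : R ≤ D; transplant C into B, giving a τ-summand of B.
    have hRD : R ≤ D := fun g hg => (projTo_eq_zero_iff hCD).mp (h3 ⟨g, hg⟩)
    -- decompose D = R ⊔ (B ⊓ D)
    have hDdec : R ⊔ (B ⊓ D) = D := by
      have hmod : (R ⊔ B) ⊓ D = R ⊔ (B ⊓ D) := sup_inf_assoc_of_le B hRD
      rw [codisjoint_iff.mp h.codisjoint, top_inf_eq] at hmod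
      exact hmod.symm
    -- the image of C in B under projection along R
    set pB : G →ₗ[ℤ] G := projTo h.symm with hpB_def
    set f : ↥C →+ G := pB.toAddMonoidHom.comp C.subtype with hf_def
    have hf_apply : ∀ y : ↥C, f y = pB (y : G) := fun _ => rfl
    have hfinj : Function.Injective f := by
      intro a b hab
      have : pB ((a : G) - b) = 0 := by
        rw [map_sub, ← hf_apply, ← hf_apply, hab, sub_self]
      have hmemR : ((a : G) - b) ∈ R := (projTo_eq_zero_iff h.symm).mp this
      have hmemC : ((a : G) - b) ∈ C := C.sub_mem a.2 b.2
      by_contra hne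
      have hsub0 : a - b ≠ 0 := sub_ne_zero.mpr hne
      exact (h1 (a - b) hsub0) (by
        rw [show ((a - b : ↥C) : G) = (a : G) - b from rfl]
        exact hmemR)
    set C₂ : AddSubgroup G := f.range with hC₂_def
    have eqvC₂ : ↥C ≃+ ↥C₂ := AddMonoidHom.ofInjective hfinj
    have hC₂B : C₂ ≤ B := by
      rintro g ⟨y, rfl⟩
      exact projTo_mem h.symm (y : G)
    -- C₂ and E := B ⊓ D are complementary in B
    have hC₂E_inf : C₂ ⊓ (B ⊓ D) = ⊥ := by
      rw [eq_bot_iff]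
      rintro g hg
      rw [AddSubgroup.mem_inf] at hg
      obtain ⟨⟨y, rfl⟩, hgBD⟩ := hg
      -- y ∈ C, pB y ∈ B ⊓ D; then y = pR y + pB y ∈ D, so y ∈ C ⊓ D = ⊥
      have hyD : (y : G) ∈ D := by
        have hdec := projTo_add_projTo h (y : G)
        have hR_mem : projTo h (y : G) ∈ R := projTo_mem h (y : G)
        have : (y : G) = projTo h (y : G) + f y := by
          rw [hf_apply]
          exact hdec.symm
        rw [this]
        exact D.add_mem (hRD hR_mem) (AddSubgroup.mem_inf.mp hgBD).2
      have : (y : G) ∈ C ⊓ D := AddSubgroup.mem_inf.mpr ⟨y.2, hyD⟩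
      rw [disjoint_iff.mp hCD.disjoint, AddSubgroup.mem_bot] at this
      rw [AddSubgroup.mem_bot]
      rw [hf_apply, this, map_zero]
    have hC₂E_sup : C₂ ⊔ (B ⊓ D) = B := by
      apply le_antisymm
      · exact sup_le hC₂B inf_le_left
      · intro g hgB
        have hgCD : g ∈ C ⊔ D := by rw [codisjoint_iff.mp hCD.codisjoint]; trivial
        rw [AddSubgroup.mem_sup] at hgCD
        obtain ⟨c, hc, d, hd, hcd⟩ := hgCD
        have hdRE : d ∈ R ⊔ (B ⊓ D) := by rw [hDdec]; exact hd
        rw [AddSubgroup.mem_sup] at hdRE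
        obtain ⟨r, hr, ee, hee, hree⟩ := hdRE
        -- g = c + r + ee; apply pB : pB g = g, pB c = f⟨c⟩, pB r = 0, pB ee = ee
        have hgeq : pB g = g := projTo_eq_self h.symm hgB
        have hpBc : pB c = f ⟨c, hc⟩ := rfl
        have hpBr : pB r = 0 := (projTo_eq_zero_iff h.symm).mpr hr
        have hpBee : pB ee = ee := projTo_eq_self h.symm (AddSubgroup.mem_inf.mp hee).1
        have : g = f ⟨c, hc⟩ + ee := by
          calc g = pB g := hgeq.symm
          _ = pB (c + (r + ee)) := by congr 1; rw [← hcd, ← hree]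
          _ = pB c + (pB r + pB ee) := by rw [map_add, map_add]
          _ = f ⟨c, hc⟩ + ee := by rw [hpBc, hpBr, hpBee, zero_add]
        rw [AddSubgroup.mem_sup]
        exact ⟨f ⟨c, hc⟩, ⟨⟨c, hc⟩, rfl⟩, ee, hee, this.symm⟩
    apply hB
    refine ⟨C₂.addSubgroupOf B, ⟨(B ⊓ D).addSubgroupOf B,
      isCompl_addSubgroupOf hC₂B inf_le_left hC₂E_inf hC₂E_sup⟩,
      ⟨((AddSubgroup.addSubgroupOfEquivOfLe hC₂B).trans eqvC₂.symm).trans φ⟩⟩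
  · -- Case 3b : mutual embedding of C and R, contradiction with R ≄ τ.
    push_neg at h3
    obtain ⟨r₀, hr₀⟩ := h3
    -- π_C is injective on R
    have hinjR : ∀ r : ↥R, projTo hCD (r : G) = 0 → r = 0 := by
      intro r hr
      by_contra hrne
      apply hr₀
      obtain ⟨a, b, ha, -, hab⟩ := exists_zsmul_rel e he r r₀ hrne
      have hab' : a • (r₀ : G) = b • (r : G) := by exact_mod_cast congrArg Subtype.val hab
      have : a • projTo hCD (r₀ : G) = b • projTo hCD (r : G) := by
        rw [← map_smul, ← map_smul, hab']
      rw [hr, smul_zero] at this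
      rcases smul_eq_zero.mp this with h' | h'
      · exact absurd h' ha
      · exact h'
    -- π_R is injective on C
    have hinjC : ∀ y : ↥C, projTo h (y : G) = 0 → y = 0 := by
      intro y hy
      by_contra hyne
      exact (h2 y hyne) ((projTo_eq_zero_iff h).mp hy)
    -- build the two embeddings
    set u : ↥C →+ ↥R := {
      toFun := fun y => ⟨projTo h (y : G), projTo_mem h (y : G)⟩
      map_zero' := by
        apply Subtype.ext
        simp
      map_add' := by
        intro a b
        apply Subtype.ext
        simp [map_add] } with hu_def
    set v : ↥R →+ ↥C := {
      toFun := fun r => ⟨projTo hCD (r : G), projTo_mem hCD (r : G)⟩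
      map_zero' := by
        apply Subtype.ext
        simp
      map_add' := by
        intro a b
        apply Subtype.ext
        simp [map_add] } with hv_def
    have huinj : Function.Injective u := by
      intro a b hab
      have : projTo h ((a : G) - b) = 0 := by
        rw [map_sub]
        have := congrArg Subtype.val hab
        simp only [hu_def, AddMonoidHom.coe_mk, ZeroHom.coe_mk] at this
        rw [this, sub_self]
      have := hinjC (a - b) (by rwa [show ((a - b : ↥C) : G) = (a : G) - b from rfl])
      rwa [sub_eq_zero] at this
    have hvinj : Function.Injective v := by
      intro a b hab
      have : projTo hCD ((a : G) - b) = 0 := by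
        rw [map_sub]
        have := congrArg Subtype.val hab
        simp only [hv_def, AddMonoidHom.coe_mk, ZeroHom.coe_mk] at this
        rw [this, sub_self]
      have := hinjR (a - b) (by rwa [show ((a - b : ↥R) : G) = (a : G) - b from rfl])
      rwa [sub_eq_zero] at this
    obtain ⟨w⟩ := mutual_rank_one ⟨c₀, hc₀⟩ fC hfC e he u huinj v hvinj
    exact hRτ ⟨(w.symm).trans φ⟩

/-- Finite-chain completely decomposable subgroups avoiding type τ. -/
def FinCD {G : Type*} [AddCommGroup G] (τ : AddSubgroup ℚ) : ℕ → AddSubgroup G → Prop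
  | 0, A => A = ⊥
  | n + 1, A => ∃ R A' : AddSubgroup G, R ⊔ A' = A ∧ R ⊓ A' = ⊥ ∧
      (∃ e : ↥R →+ ℚ, Function.Injective e) ∧ ¬ Nonempty (↥R ≃+ τ) ∧ FinCD τ n A'

theorem finCD_addSubgroupOf {G : Type*} [AddCommGroup G] (τ : AddSubgroup ℚ) :
    ∀ (n : ℕ) (A W : AddSubgroup G), FinCD τ n A → A ≤ W →
      FinCD τ n (A.addSubgroupOf W) := by
  intro n
  induction n with
  | zero =>
    intro A W hA hAW
    rw [show A = ⊥ from hA]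
    exact AddSubgroup.bot_addSubgroupOf W
  | succ n ih =>
    intro A W hA hAW
    obtain ⟨R, A', hsup, hinf, hR1, hRτ, hfin⟩ := hA
    have hRW : R ≤ W := le_trans (hsup ▸ le_sup_left) hAW
    have hA'W : A' ≤ W := le_trans (hsup ▸ le_sup_right) hAW
    refine ⟨R.addSubgroupOf W, A'.addSubgroupOf W, ?_, ?_, ?_, ?_, ih A' W hfin hA'W⟩
    · rw [← addSubgroupOf_sup hRW hA'W, hsup]
    · rw [eq_bot_iff]
      intro x hx
      rw [AddSubgroup.mem_inf, AddSubgroup.mem_addSubgroupOf,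
        AddSubgroup.mem_addSubgroupOf] at hx
      have : (x : G) ∈ R ⊓ A' := AddSubgroup.mem_inf.mpr hx
      rw [hinf, AddSubgroup.mem_bot] at this
      rw [AddSubgroup.mem_bot]
      exact Subtype.ext this
    · obtain ⟨e, he⟩ := hR1
      exact ⟨e.comp (AddSubgroup.addSubgroupOfEquivOfLe hRW).toAddMonoidHom,
        he.comp (AddEquiv.injective _)⟩
    · rintro ⟨w⟩
      exact hRτ ⟨(AddSubgroup.addSubgroupOfEquivOfLe hRW).symm.trans w⟩

/-- Main induction: a complement of a finite chain of non-τ rank-one summands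
inherits τ-clippedness. -/
theorem lem_finCD {G : Type*} [AddCommGroup G] [NoZeroSMulDivisors ℤ G]
    (τ : AddSubgroup ℚ) (hτ : τ ≠ ⊥) :
    ∀ (n : ℕ) (A B : AddSubgroup G), FinCD τ n A → IsCompl A B →
      IsClippedFor ↥B τ → IsClippedFor G τ := by
  intro n
  induction n with
  | zero =>
    intro A B hA hAB hB
    rw [show A = ⊥ from hA] at hAB
    have hBtop : B = ⊤ := by
      have := codisjoint_iff.mp hAB.codisjoint
      rwa [bot_sup_eq] at this
    rw [hBtop] at hB
    exact isClippedFor_of_equiv AddSubgroup.topEquiv τ hB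
  | succ n ih =>
    intro A B hA hAB hB
    obtain ⟨R, A', hsup, hinf, hR1, hRτ, hfin⟩ := hA
    set B₂ : AddSubgroup G := R ⊔ B with hB₂_def
    have hRA : R ≤ A := hsup ▸ le_sup_left
    have hA'A : A' ≤ A := hsup ▸ le_sup_right
    have hABbot : A ⊓ B = ⊥ := disjoint_iff.mp hAB.disjoint
    have hRB_inf : R ⊓ B = ⊥ := by
      rw [eq_bot_iff, ← hABbot]
      exact inf_le_inf_right B hRA
    have hcompl : IsCompl A' B₂ := by
      constructor
      · rw [disjoint_iff, eq_bot_iff]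
        intro x hx
        rw [AddSubgroup.mem_inf] at hx
        obtain ⟨hxA', hxRB⟩ := hx
        rw [AddSubgroup.mem_sup] at hxRB
        obtain ⟨r, hr, b, hb, hrb⟩ := hxRB
        have hbA : b ∈ A := by
          have : b = x - r := by rw [← hrb]; exact (add_sub_cancel_left r b).symm
          rw [this]
          exact A.sub_mem (hA'A hxA') (hRA hr)
        have hb0 : b = 0 := by
          have : b ∈ A ⊓ B := AddSubgroup.mem_inf.mpr ⟨hbA, hb⟩
          rwa [hABbot, AddSubgroup.mem_bot] at this
        have hxr : x = r := by rw [← hrb, hb0, add_zero]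
        have : x ∈ R ⊓ A' := AddSubgroup.mem_inf.mpr ⟨hxr ▸ hr, hxA'⟩
        rwa [hinf] at this
      · rw [codisjoint_iff]
        calc A' ⊔ B₂ = (R ⊔ A') ⊔ B := by
              rw [hB₂_def, ← sup_assoc, sup_comm A' R]
          _ = ⊤ := by rw [hsup]; exact codisjoint_iff.mp hAB.codisjoint
    haveI : NoZeroSMulDivisors ℤ ↥B₂ := subgroup_torsionfree B₂
    have hRB₂ : R ≤ B₂ := le_sup_left
    have hBB₂ : B ≤ B₂ := le_sup_right
    have hclipB₂ : IsClippedFor ↥B₂ τ := by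
      apply core (R.addSubgroupOf B₂) (B.addSubgroupOf B₂) τ hτ
      · exact isCompl_addSubgroupOf hRB₂ hBB₂ hRB_inf rfl
      · obtain ⟨e, he⟩ := hR1
        exact ⟨e.comp (AddSubgroup.addSubgroupOfEquivOfLe hRB₂).toAddMonoidHom,
          he.comp (AddEquiv.injective _)⟩
      · rintro ⟨w⟩
        exact hRτ ⟨(AddSubgroup.addSubgroupOfEquivOfLe hRB₂).symm.trans w⟩
      · exact isClippedFor_of_equiv (AddSubgroup.addSubgroupOfEquivOfLe hBB₂).symm τ hB
    exact ih A' B₂ hfin hcompl hclipB₂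

section DS

open DirectSum

variable {ι : Type} {β : ι → Type*} [∀ i, AddCommGroup (β i)]

/-- The subgroup of a direct sum supported in a set `s`. -/
def suppSG (β : ι → Type*) [∀ i, AddCommGroup (β i)] (s : Set ι) :
    AddSubgroup (⨁ i, β i) where
  carrier := {x | ∀ i ∉ s, x i = 0}
  zero_mem' := fun i _ => DirectSum.zero_apply (β := β) i
  add_mem' := by
    intro x y hx hy i hi
    rw [DirectSum.add_apply, hx i hi, hy i hi, add_zero]
  neg_mem' := by
    intro x hx i hi
    rw [← zero_sub x, DirectSum.sub_apply, DirectSum.zero_apply, hx i hi, sub_zero]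

theorem mem_suppSG {s : Set ι} {x : ⨁ i, β i} :
    x ∈ suppSG β s ↔ ∀ i ∉ s, x i = 0 := ⟨fun h => h, fun h => h⟩

theorem suppSG_mono {s t : Set ι} (h : s ⊆ t) : suppSG β s ≤ suppSG β t :=
  fun x hx => mem_suppSG.mpr (fun i hi => mem_suppSG.mp hx i (fun hs => hi (h hs)))

theorem exists_suppSG_finset (x : ⨁ i, β i) : ∃ F : Finset ι, x ∈ suppSG β ↑F := by
  classical
  induction x using DirectSum.induction_on with
  | zero => exact ⟨∅, (suppSG β _).zero_mem⟩
  | of i b =>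
    refine ⟨{i}, mem_suppSG.mpr ?_⟩
    intro j hj
    refine DirectSum.of_eq_of_ne _ _ _ (fun hij => hj ?_)
    rw [← hij]
    simp
  | add x y hx hy =>
    obtain ⟨F1, h1⟩ := hx
    obtain ⟨F2, h2⟩ := hy
    refine ⟨F1 ∪ F2, (suppSG β _).add_mem ?_ ?_⟩
    · refine suppSG_mono ?_ h1
      intro a ha
      simp only [Finset.coe_union, Set.mem_union, Finset.mem_coe] at *
      exact Or.inl ha
    · refine suppSG_mono ?_ h2
      intro a ha
      simp only [Finset.coe_union, Set.mem_union, Finset.mem_coe] at *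
      exact Or.inr ha

theorem suppSG_codisjoint (s : Set ι) : suppSG β s ⊔ suppSG β sᶜ = ⊤ := by
  classical
  rw [eq_top_iff]
  rintro x -
  induction x using DirectSum.induction_on with
  | zero => exact AddSubgroup.zero_mem _
  | of i b =>
    by_cases hi : i ∈ s
    · apply AddSubgroup.mem_sup_left
      rw [mem_suppSG]
      intro j hj
      exact DirectSum.of_eq_of_ne _ _ _ (fun hij => hj (hij ▸ hi))
    · apply AddSubgroup.mem_sup_right
      rw [mem_suppSG]
      intro j hj
      rw [Set.notMem_compl_iff] at hj
      exact DirectSum.of_eq_of_ne _ _ _ (fun hij => hi (hij ▸ hj))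
  | add x y hx hy => exact AddSubgroup.add_mem _ hx hy

/-- Evaluation at an index as an additive homomorphism. -/
def evalSG (β : ι → Type*) [∀ i, AddCommGroup (β i)] (i : ι) : (⨁ i, β i) →+ β i where
  toFun x := x i
  map_zero' := DirectSum.zero_apply (β := β) i
  map_add' x y := DirectSum.add_apply x y i

/-- If a direct sum of subgroups of `ℚ` is τ-clipped, no component is
isomorphic to τ. -/
theorem clip_component {ι : Type} (τs : ι → AddSubgroup ℚ) (τ : AddSubgroup ℚ)
    (h : IsClippedFor (⨁ i, ↥(τs i)) τ) (i : ι) : ¬ Nonempty (↥(τs i) ≃+ ↥τ) := by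
  classical
  rintro ⟨w⟩
  apply h
  refine ⟨(DirectSum.of (fun j => ↥(τs j)) i).range,
    ⟨suppSG (fun j => ↥(τs j)) ({i} : Set ι)ᶜ, ?_, ?_⟩,
    ⟨(AddMonoidHom.ofInjective (DirectSum.of_injective i)).symm.trans w⟩⟩
  · rw [disjoint_iff, eq_bot_iff]
    rintro x hx
    rw [AddSubgroup.mem_inf] at hx
    obtain ⟨⟨b, rfl⟩, hx2⟩ := hx
    have : b = 0 := by
      have := mem_suppSG.mp hx2 i (by simp)
      rwa [DirectSum.of_eq_same] at this
    rw [this, map_zero]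
    exact AddSubgroup.zero_mem _
  · rw [codisjoint_iff, eq_top_iff]
    rintro x -
    rw [AddSubgroup.mem_sup]
    refine ⟨DirectSum.of (fun j => ↥(τs j)) i (x i), ⟨x i, rfl⟩,
      x - DirectSum.of (fun j => ↥(τs j)) i (x i), mem_suppSG.mpr ?_, by rw [add_sub_cancel]⟩
    intro j hj
    have hji : j = i := by simpa using hj
    subst hji
    rw [DirectSum.sub_apply, DirectSum.of_eq_same, sub_self]

end DS


-- ===== main =====
/-- If `G = A ⊕ B` with `A` completely decomposable and both `A`
and `B` τ-clipped, then `G` is τ-clipped. -/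
theorem statement3 (G : Type*) [AddCommGroup G] [NoZeroSMulDivisors ℤ G]
    (A B : AddSubgroup G) (τ : AddSubgroup ℚ) (hτ : τ ≠ ⊥)
    (h : IsCompl A B) (hA : IsCompletelyDecomposable A)
    (hA2 : IsClippedFor A τ) (hB : IsClippedFor B τ) :
    IsClippedFor G τ := by
  classical
  obtain ⟨ι, τs, hne, ⟨ψ⟩⟩ := hA
  have hclip : ∀ i, ¬ Nonempty (↥(τs i) ≃+ ↥τ) :=
    fun i => clip_component τs τ (isClippedFor_of_equiv ψ τ hA2) i
  set AF : Set ι → AddSubgroup G := fun s =>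
    ((suppSG (fun i => ↥(τs i)) s).comap ψ.toAddMonoidHom).map A.subtype with hAF_def
  have hAF_memmap : ∀ (s : Set ι) (x : G), x ∈ AF s ↔
      ∃ a : ↥A, ψ a ∈ suppSG (fun i => ↥(τs i)) s ∧ (a : G) = x := by
    intro s x
    constructor
    · rintro ⟨a, ha, rfl⟩
      exact ⟨a, AddSubgroup.mem_comap.mp ha, rfl⟩
    · rintro ⟨a, ha, rfl⟩
      exact ⟨a, AddSubgroup.mem_comap.mpr ha, rfl⟩
  have hAF_le : ∀ s, AF s ≤ A := by
    rintro s x hx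
    obtain ⟨a, -, rfl⟩ := (hAF_memmap s x).mp hx
    exact a.2
  have hAF_mono : ∀ {s t : Set ι}, s ⊆ t → AF s ≤ AF t := fun hst =>
    AddSubgroup.map_mono (AddSubgroup.comap_mono (suppSG_mono hst))
  have hAF_inf : ∀ s t : Set ι, (∀ i, i ∈ s → i ∈ t → False) → AF s ⊓ AF t = ⊥ := by
    intro s t hst
    rw [eq_bot_iff]
    intro x hx
    rw [AddSubgroup.mem_inf] at hx
    obtain ⟨a, ha, hax⟩ := (hAF_memmap s x).mp hx.1
    obtain ⟨a', ha', ha'x⟩ := (hAF_memmap t x).mp hx.2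
    have haa : a' = a := Subtype.ext (ha'x.trans hax.symm)
    rw [haa] at ha'
    have hzero : ψ a = 0 := by
      refine DFinsupp.ext fun i => ?_
      rw [show ((0 : ⨁ i, ↥(τs i)) i) = 0 from DirectSum.zero_apply i]
      by_cases his : i ∈ s
      · exact mem_suppSG.mp ha' i (fun hit => hst i his hit)
      · exact mem_suppSG.mp ha i his
    have ha0 : a = 0 := ψ.injective (by rw [hzero, map_zero])
    rw [AddSubgroup.mem_bot, ← hax, ha0]
    rfl
  have hAF_sup_compl : ∀ s : Set ι, AF s ⊔ AF sᶜ = A := by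
    intro s
    apply le_antisymm (sup_le (hAF_le s) (hAF_le sᶜ))
    intro x hxA
    have hx : ψ ⟨x, hxA⟩ ∈ suppSG (fun i => ↥(τs i)) s ⊔ suppSG (fun i => ↥(τs i)) sᶜ := by
      rw [suppSG_codisjoint]; trivial
    rw [AddSubgroup.mem_sup] at hx
    obtain ⟨u, hu, v, hv, huv⟩ := hx
    rw [AddSubgroup.mem_sup]
    refine ⟨↑(ψ.symm u), (hAF_memmap s _).mpr ⟨ψ.symm u,
        by rw [ψ.apply_symm_apply]; exact hu, rfl⟩,
      ↑(ψ.symm v), (hAF_memmap sᶜ _).mpr ⟨ψ.symm v,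
        by rw [ψ.apply_symm_apply]; exact hv, rfl⟩, ?_⟩
    have heq : ψ.symm u + ψ.symm v = (⟨x, hxA⟩ : ↥A) := by
      apply ψ.injective
      rw [map_add, ψ.apply_symm_apply, ψ.apply_symm_apply, huv]
    rw [← AddSubgroup.coe_add, heq]
  -- FinCD structure of the finite pieces
  have build : ∀ F : Finset ι, FinCD τ F.card (AF ↑F) := by
    intro F
    induction F using Finset.induction_on with
    | empty =>
      have hbot : AF ↑(∅ : Finset ι) = ⊥ := by
        rw [eq_bot_iff]
        intro x hx
        obtain ⟨a, ha, hax⟩ := (hAF_memmap _ _).mp hx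
        have hzero : ψ a = 0 := by
          refine DFinsupp.ext fun i => ?_
          rw [show ((0 : ⨁ i, ↥(τs i)) i) = 0 from DirectSum.zero_apply i]
          exact mem_suppSG.mp ha i (by simp)
        have ha0 : a = 0 := ψ.injective (by rw [hzero, map_zero])
        rw [AddSubgroup.mem_bot, ← hax, ha0]
        rfl
      rw [Finset.card_empty, hbot]
      rfl
    | @insert j F hjF ih =>
      rw [Finset.card_insert_of_notMem hjF]
      -- the rank-one piece at j is isomorphic to τs j
      set K : AddSubgroup ↥A :=
        (suppSG (fun i => ↥(τs i)) ({j} : Set ι)).comap ψ.toAddMonoidHom with hK_def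
      have hKmap : AF ({j} : Set ι) = K.map A.subtype := rfl
      have e1 : ↥K ≃+ ↥(AF ({j} : Set ι)) :=
        (AddSubgroup.equivMapOfInjective K A.subtype A.subtype_injective).trans
          (AddEquiv.addSubgroupCongr hKmap.symm)
      set g2 : ↥K →+ ↥(τs j) :=
        (evalSG (fun i => ↥(τs i)) j).comp (ψ.toAddMonoidHom.comp K.subtype) with hg2_def
      have hg2app : ∀ k : ↥K, g2 k = (ψ (k : ↥A)) j := fun k => rfl
      have hg2inj : Function.Injective g2 := by
        intro k k' hkk
        have hd : ψ ((k : ↥A) - (k' : ↥A)) = 0 := by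
          refine DFinsupp.ext fun i => ?_
          rw [show ((0 : ⨁ i, ↥(τs i)) i) = 0 from DirectSum.zero_apply i]
          rw [map_sub, DirectSum.sub_apply]
          by_cases hij : i = j
          · subst hij
            rw [show (ψ (k : ↥A)) i = g2 k from rfl, show (ψ (k' : ↥A)) i = g2 k' from rfl,
              hkk, sub_self]
          · have hk0 : (ψ (k : ↥A)) i = 0 :=
              mem_suppSG.mp (AddSubgroup.mem_comap.mp k.2) i (by simp [hij])
            have hk'0 : (ψ (k' : ↥A)) i = 0 :=
              mem_suppSG.mp (AddSubgroup.mem_comap.mp k'.2) i (by simp [hij])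
            rw [hk0, hk'0, sub_zero]
        have : (k : ↥A) - (k' : ↥A) = 0 := ψ.injective (by rw [hd, map_zero])
        exact Subtype.ext (by rwa [sub_eq_zero] at this)
      have hg2surj : Function.Surjective g2 := by
        intro t
        have hmem : ψ.symm (DirectSum.of (fun i => ↥(τs i)) j t) ∈ K := by
          rw [hK_def, AddSubgroup.mem_comap]
          rw [show ψ.toAddMonoidHom (ψ.symm (DirectSum.of (fun i => ↥(τs i)) j t)) =
            DirectSum.of (fun i => ↥(τs i)) j t from ψ.apply_symm_apply _]
          exact mem_suppSG.mpr fun i hi =>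
            DirectSum.of_eq_of_ne _ _ _ (fun hij => hi (by simp [hij]))
        refine ⟨⟨ψ.symm (DirectSum.of (fun i => ↥(τs i)) j t), hmem⟩, ?_⟩
        have : g2 ⟨ψ.symm (DirectSum.of (fun i => ↥(τs i)) j t), hmem⟩ =
            (ψ (ψ.symm (DirectSum.of (fun i => ↥(τs i)) j t))) j := rfl
        rw [this, ψ.apply_symm_apply, DirectSum.of_eq_same]
      have ρ : ↥(AF ({j} : Set ι)) ≃+ ↥(τs j) :=
        e1.symm.trans (AddEquiv.ofBijective g2 ⟨hg2inj, hg2surj⟩)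
      refine ⟨AF ({j} : Set ι), AF ↑F, ?_, ?_, ?_, ?_, ih⟩
      · -- sup
        apply le_antisymm
        · apply sup_le
          · exact hAF_mono (by intro a ha; rw [Set.mem_singleton_iff] at ha; simp [ha])
          · exact hAF_mono (by intro a ha; rw [Finset.mem_coe] at ha; simp [ha])
        · intro x hx
          obtain ⟨a, ha, hax⟩ := (hAF_memmap _ _).mp hx
          set a1 : ↥A := ψ.symm (DirectSum.of (fun i => ↥(τs i)) j ((ψ a) j)) with ha1_def
          set a2 : ↥A := a - a1 with ha2_def
          have hψa1 : ψ a1 = DirectSum.of (fun i => ↥(τs i)) j ((ψ a) j) :=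
            ψ.apply_symm_apply _
          have hψa2 : ψ a2 = ψ a - DirectSum.of (fun i => ↥(τs i)) j ((ψ a) j) := by
            rw [ha2_def, map_sub, hψa1]
          rw [AddSubgroup.mem_sup]
          refine ⟨↑a1, (hAF_memmap _ _).mpr ⟨a1, ?_, rfl⟩,
            ↑a2, (hAF_memmap _ _).mpr ⟨a2, ?_, rfl⟩, ?_⟩
          · rw [hψa1]
            exact mem_suppSG.mpr fun i hi =>
              DirectSum.of_eq_of_ne _ _ _ (fun hij => hi (by simp [hij]))
          · rw [hψa2]
            refine mem_suppSG.mpr fun i hi => ?_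
            rw [DirectSum.sub_apply]
            by_cases hij : i = j
            · subst hij
              rw [DirectSum.of_eq_same, sub_self]
            · have hins : i ∉ (↑(insert j F) : Set ι) := by
                rw [Finset.coe_insert]
                intro hcon
                rcases Set.mem_insert_iff.mp hcon with h' | h'
                · exact hij h'
                · exact hi h'
              rw [mem_suppSG.mp ha i hins,
                DirectSum.of_eq_of_ne _ _ _ (fun hji => hij hji), sub_zero]
          · rw [← hax]
            have heq : a1 + a2 = a := by
              rw [ha2_def, add_comm]
              exact sub_add_cancel a a1
            rw [← AddSubgroup.coe_add, heq]
      · -- inf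
        refine hAF_inf ({j} : Set ι) ↑F (fun i hi1 hi2 => ?_)
        rw [Set.mem_singleton_iff] at hi1
        rw [Finset.mem_coe] at hi2
        exact hjF (hi1 ▸ hi2)
      · exact ⟨(τs j).subtype.comp ρ.toAddMonoidHom,
          fun a b hab => ρ.injective (Subtype.ext hab)⟩
      · rintro ⟨w⟩
        exact hclip j ⟨ρ.symm.trans w⟩
  -- main argument
  rintro ⟨C, ⟨D, hCD⟩, ⟨φ⟩⟩
  set fC : ↥C →+ ℚ := τ.subtype.comp φ.toAddMonoidHom with hfC_def
  have hfC : Function.Injective fC := fun a b hab => φ.injective (Subtype.ext hab)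
  obtain ⟨t0, ht0⟩ := exists_ne_zero_of_ne_bot hτ
  set c₀ : ↥C := φ.symm t0 with hc₀_def
  have hc₀ : c₀ ≠ 0 := fun hh => ht0 (by
    rw [← AddEquiv.apply_symm_apply φ t0, ← hc₀_def, hh, map_zero])
  set aA : ↥A := ⟨projTo h ((c₀ : G)), projTo_mem h _⟩ with haA_def
  obtain ⟨F, hF⟩ := exists_suppSG_finset (ψ aA)
  set H : AddSubgroup G := AF ↑F ⊔ B with hH_def
  have hAFA : AF ↑F ≤ A := hAF_le _
  have hABbot : A ⊓ B = ⊥ := disjoint_iff.mp h.disjoint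
  have hAFB : AF ↑F ⊓ B = ⊥ := by
    rw [eq_bot_iff, ← hABbot]
    exact inf_le_inf_right B hAFA
  set A₂ : AddSubgroup G := AF (↑F : Set ι)ᶜ with hA₂_def
  have hA₂A : A₂ ≤ A := hAF_le _
  have hsupA : AF ↑F ⊔ A₂ = A := hAF_sup_compl ↑F
  have hinfA : AF ↑F ⊓ A₂ = ⊥ := hAF_inf ↑F (↑F : Set ι)ᶜ (fun i h1 h2 => h2 h1)
  have hA₂H : IsCompl A₂ H := by
    constructor
    · rw [disjoint_iff, eq_bot_iff]
      intro x hx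
      rw [AddSubgroup.mem_inf] at hx
      obtain ⟨hxA₂, hxH⟩ := hx
      rw [hH_def, AddSubgroup.mem_sup] at hxH
      obtain ⟨a1, ha1, b, hb, hab⟩ := hxH
      have hbA : b ∈ A := by
        have hbeq : b = x - a1 := by rw [← hab]; exact (add_sub_cancel_left a1 b).symm
        rw [hbeq]
        exact A.sub_mem (hA₂A hxA₂) (hAFA ha1)
      have hb0 : b = 0 := by
        have : b ∈ A ⊓ B := AddSubgroup.mem_inf.mpr ⟨hbA, hb⟩
        rwa [hABbot, AddSubgroup.mem_bot] at this
      have hxa1 : x = a1 := by rw [← hab, hb0, add_zero]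
      have : x ∈ AF ↑F ⊓ A₂ := AddSubgroup.mem_inf.mpr ⟨hxa1 ▸ ha1, hxA₂⟩
      rwa [hinfA] at this
    · rw [codisjoint_iff]
      calc A₂ ⊔ H = (AF ↑F ⊔ A₂) ⊔ B := by rw [hH_def, ← sup_assoc, sup_comm A₂ (AF ↑F)]
        _ = ⊤ := by rw [hsupA]; exact codisjoint_iff.mp h.codisjoint
  have hc₀H : ((c₀ : G)) ∈ H := by
    have hdec := projTo_add_projTo h ((c₀ : G))
    have h1 : projTo h ((c₀ : G)) ∈ AF ↑F := (hAF_memmap _ _).mpr ⟨aA, hF, rfl⟩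
    have h2 : projTo h.symm ((c₀ : G)) ∈ B := projTo_mem h.symm _
    rw [← hdec]
    exact H.add_mem ((le_sup_left : AF ↑F ≤ H) h1) ((le_sup_right : B ≤ H) h2)
  have hCH : ∀ y : ↥C, ((y : G)) ∈ H := by
    intro y
    obtain ⟨a, b, ha, -, hab⟩ := exists_zsmul_rel fC hfC c₀ y hc₀
    have hab' : a • ((y : G)) = b • ((c₀ : G)) := by
      exact_mod_cast congrArg Subtype.val hab
    have hpz : projTo hA₂H ((c₀ : G)) = 0 := (projTo_eq_zero_iff hA₂H).mpr hc₀H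
    have hsm : a • projTo hA₂H ((y : G)) = b • projTo hA₂H ((c₀ : G)) := by
      rw [← map_smul, ← map_smul, hab']
    rw [hpz, smul_zero] at hsm
    rcases smul_eq_zero.mp hsm with h' | h'
    · exact absurd h' ha
    · exact (projTo_eq_zero_iff hA₂H).mp h'
  have hCleH : C ≤ H := fun g hg => hCH ⟨g, hg⟩
  have hsupCH : C ⊔ (D ⊓ H) = H := by
    have hmod : (C ⊔ D) ⊓ H = C ⊔ (D ⊓ H) := sup_inf_assoc_of_le D hCleH
    rw [codisjoint_iff.mp hCD.codisjoint, top_inf_eq] at hmod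
    exact hmod.symm
  have hinfCH : C ⊓ (D ⊓ H) = ⊥ := by
    rw [eq_bot_iff]
    intro g hg
    rw [AddSubgroup.mem_inf, AddSubgroup.mem_inf] at hg
    have : g ∈ C ⊓ D := AddSubgroup.mem_inf.mpr ⟨hg.1, hg.2.1⟩
    rwa [disjoint_iff.mp hCD.disjoint] at this
  haveI : NoZeroSMulDivisors ℤ ↥H := subgroup_torsionfree H
  have hclipH : IsClippedFor ↥H τ := by
    apply lem_finCD τ hτ F.card ((AF ↑F).addSubgroupOf H) (B.addSubgroupOf H)
    · exact finCD_addSubgroupOf τ F.card (AF ↑F) H (build F) le_sup_left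
    · exact isCompl_addSubgroupOf le_sup_left le_sup_right hAFB rfl
    · exact isClippedFor_of_equiv
        (AddSubgroup.addSubgroupOfEquivOfLe (le_sup_right : B ≤ H)).symm τ hB
  exact hclipH ⟨C.addSubgroupOf H, ⟨(D ⊓ H).addSubgroupOf H,
    isCompl_addSubgroupOf hCleH inf_le_right hinfCH hsupCH⟩,
    ⟨(AddSubgroup.addSubgroupOfEquivOfLe hCleH).trans φ⟩⟩

end Paper
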